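/- Fix 0 < p < 1 and set q := 1 − p. Let ν_{n,m} be defined by ν_{n,m} = 1/(p q^{n−m}) + Σ_{1≤ℓ<m} ν_{n,ℓ}/2^{m−ℓ} for 1 ≤ m ≤ n, and let s_{n,m} be defined by s_{n,m} = (2ν_{n,m} − 1)/(p q^{n−m}) + Σ_{1≤ℓ<m} s_{n,ℓ}/2^{m−ℓ} for 1 ≤ m ≤ n. Then for all 1 ≤ m ≤ n: ν_{n,m} = (1/(p q^{n−1}))·((1 − q^{m−1})/(2p) + q^{m−1}), and s_{n,m} − ν_{n,m}² = −ν_{n,m} + (3q² − (4q² − 1)q^{2m})/(4p³(1+q)q^{2n}). -/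

import Mathlib

open Filter MeasureTheory Real

namespace EA

/-- The transition probability `λ_{n,m,ℓ}`. -/
noncomputable def lam (n m ℓ : ℕ) : ℝ :=
  (1 - 1/(n:ℝ))^n * ((n:ℝ) - 1)^(-(ℓ:ℤ)) *
    ∑ j ∈ Finset.range (min (n - m) (m - ℓ) + 1),
      ((n - m).choose j : ℝ) * (m.choose (j + ℓ) : ℝ) * ((n:ℝ) - 1)^(-(2*(j:ℤ)))

/-- `Λ_{n,m} = Σ_{1 ≤ ℓ ≤ m} λ_{n,m,ℓ}`. -/
noncomputable def Lam (n m : ℕ) : ℝ := ∑ ℓ ∈ Finset.range m, lam n m (ℓ + 1)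

/-- The probability generating function `P_{n,m}(t)` of `X_{n,m}`. -/
noncomputable def Pgen (n : ℕ) : ℕ → ℝ → ℝ
  | 0, _ => 1
  | (m+1), t =>
      (t * ∑ ℓ ∈ Finset.range (m+1), lam n (m+1) (ℓ+1) * Pgen n (m - ℓ) t) /
        (1 - (1 - Lam n (m+1)) * t)
  decreasing_by exact Nat.lt_succ_of_le (Nat.sub_le m ℓ)

/-- The entire function `S_r(z)`. -/
noncomputable def S (r : ℕ) (z : ℝ) : ℝ :=
  ∑' ℓ : ℕ, (z^(ℓ+1) / (Nat.factorial (ℓ+1) : ℝ)) *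
    ∑ j ∈ Finset.range (ℓ+1), ((ℓ + 1 - j : ℕ) : ℝ)^r * (1 - z)^j / (Nat.factorial j : ℝ)

/-- Harmonic numbers `H_m`. -/
noncomputable def Hm (m : ℕ) : ℝ := ∑ j ∈ Finset.range m, 1/((j:ℝ)+1)

/-- Second-order harmonic numbers `H_m^{(2)}`. -/
noncomputable def Hm2 (m : ℕ) : ℝ := ∑ j ∈ Finset.range m, 1/((j:ℝ)+1)^2

/-- `φ₁(z) = ∫_0^z (1/S₁(t) - 1/t) dt`. -/
noncomputable def phi1 (z : ℝ) : ℝ := ∫ t in (0:ℝ)..z, (1 / S 1 t - 1 / t)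

/-- `φ₂(z)`. -/
noncomputable def phi2 (z : ℝ) : ℝ :=
  1/2 - ∫ x in (0:ℝ)..z,
    (S 2 x * deriv (S 1) x / (2 * (S 1 x)^3) - S 0 x / (S 1 x)^2
      - 1/(2 * S 1 x) - 1/(2*x^2) + 1/x)

/-- `ψ₁(z)`. -/
noncomputable def psi1 (z : ℝ) : ℝ :=
  ∫ x in (0:ℝ)..z, (S 2 x / (S 1 x)^3 - 1/x^2 + 2/x)

/-- `ψ₂(z)`. -/
noncomputable def psi2 (z : ℝ) : ℝ :=
  7/12 - ∫ x in (0:ℝ)..z,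
    (5 * deriv (S 1) x * (S 2 x)^2 / (2*(S 1 x)^5)
      - (2 * deriv (S 1) x * S 3 x + S 2 x * deriv (S 2) x + 6 * S 0 x * S 2 x) / (2*(S 1 x)^4)
      - S 0 x / (S 1 x)^3 + 2/(S 1 x)^2 - 1/x^3 + 3/x^2 - 11/(2*x))

/-- The mean sequence `μ_{n,m}`. -/
noncomputable def mu (n : ℕ) : ℕ → ℝ
  | 0 => 0
  | (m+1) =>
      (1 + ∑ ℓ ∈ Finset.range (m+1), lam n (m+1) (ℓ+1) * mu n (m - ℓ)) / Lam n (m+1)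
  decreasing_by exact Nat.lt_succ_of_le (Nat.sub_le m ℓ)

/-- The variance sequence `σ²_{n,m}`, the unique solution of
`Σ_{1≤ℓ≤m} λ_{n,m,ℓ}(σ²_{n,m} − σ²_{n,m−ℓ}) = −1 + Σ_{1≤ℓ≤m} λ_{n,m,ℓ}(μ_{n,m} − μ_{n,m−ℓ})²`
with `σ²_{n,0} = 0`. -/
noncomputable def varX (n : ℕ) : ℕ → ℝ
  | 0 => 0
  | (m+1) =>
      (-1 + ∑ ℓ ∈ Finset.range (m+1), lam n (m+1) (ℓ+1) *
          (varX n (m - ℓ) + (mu n (m+1) - mu n (m - ℓ))^2)) / Lam n (m+1)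
  decreasing_by exact Nat.lt_succ_of_le (Nat.sub_le m ℓ)

/-- The normalized transition probability `λ*_{n,m,ℓ}`. -/
noncomputable def lamStar (n m ℓ : ℕ) : ℝ :=
  ∑ j ∈ Finset.range (min (n + 1 - m) (m - ℓ) + 1),
    ((n + 1 - m).choose j : ℝ) * (m.choose (j + ℓ) : ℝ) * (n:ℝ)^(-((ℓ:ℤ) + 2*j))

/-- The probability generating function `Q_{n,m}` for LeadingOnes. -/
noncomputable def QLO (p : ℝ) (n : ℕ) : ℕ → ℝ → ℝ
  | 0, _ => 1
  | (m+1), t =>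
      (p * (1-p)^(n-(m+1)) * t / (1 - (1 - p*(1-p)^(n-(m+1))) * t)) *
        ((2:ℝ)^(-(m:ℤ)) + ∑ ℓ ∈ Finset.range m, QLO p n (m-ℓ) t / 2^(ℓ+1))
  decreasing_by exact Nat.lt_succ_of_le (Nat.sub_le m ℓ)

/-- The mean `ν_{n,m}` of `Y_{n,m}` (LeadingOnes). -/
noncomputable def nuLO (p : ℝ) (n : ℕ) : ℕ → ℝ
  | 0 => 0
  | (m+1) =>
      1/(p*(1-p)^(n-(m+1))) + ∑ ℓ ∈ Finset.range m, nuLO p n (m-ℓ) / 2^(ℓ+1)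
  decreasing_by exact Nat.lt_succ_of_le (Nat.sub_le m ℓ)

/-- The second moment `s_{n,m}` of `Y_{n,m}` (LeadingOnes). -/
noncomputable def sLO (p : ℝ) (n : ℕ) : ℕ → ℝ
  | 0 => 0
  | (m+1) =>
      (2 * nuLO p n (m+1) - 1)/(p*(1-p)^(n-(m+1)))
        + ∑ ℓ ∈ Finset.range m, sLO p n (m-ℓ) / 2^(ℓ+1)
  decreasing_by exact Nat.lt_succ_of_le (Nat.sub_le m ℓ)



lemma nuLO_one (p : ℝ) (n : ℕ) : nuLO p n 1 = 1/(p*(1-p)^(n-1)) := by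
  rw [show (1:ℕ) = 0+1 from rfl, nuLO]; simp

lemma sLO_one (p : ℝ) (n : ℕ) :
    sLO p n 1 = (2*nuLO p n 1 - 1)/(p*(1-p)^(n-1)) := by
  conv_lhs => rw [show (1:ℕ) = 0+1 from rfl, sLO]
  simp

lemma nuLO_rec (p : ℝ) (n m : ℕ) :
    nuLO p n (m+2) = nuLO p n (m+1) + 1/(p*(1-p)^(n-(m+2))) - 1/(p*(1-p)^(n-(m+1)))/2 := by
  have h1 : ∑ ℓ ∈ Finset.range m, nuLO p n (m-ℓ) / 2^(ℓ+1)
      = nuLO p n (m+1) - 1/(p*(1-p)^(n-(m+1))) := by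
    rw [nuLO]; ring
  rw [show m+2 = (m+1)+1 from rfl, nuLO, Finset.sum_range_succ']
  simp only [Nat.succ_sub_succ, Nat.sub_zero]
  have h2 : ∀ ℓ ∈ Finset.range m, nuLO p n (m-ℓ) / 2^(ℓ+1+1) = (nuLO p n (m-ℓ) / 2^(ℓ+1))/2 := by
    intro ℓ _; rw [pow_succ]; ring
  rw [Finset.sum_congr rfl h2, ← Finset.sum_div, h1]
  ring

lemma sLO_rec (p : ℝ) (n m : ℕ) :
    sLO p n (m+2) = sLO p n (m+1)
      + (2*nuLO p n (m+2)-1)/(p*(1-p)^(n-(m+2)))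
      - ((2*nuLO p n (m+1)-1)/(p*(1-p)^(n-(m+1))))/2 := by
  have h1 : ∑ ℓ ∈ Finset.range m, sLO p n (m-ℓ) / 2^(ℓ+1)
      = sLO p n (m+1) - (2*nuLO p n (m+1)-1)/(p*(1-p)^(n-(m+1))) := by
    rw [sLO]; ring
  rw [show m+2 = (m+1)+1 from rfl, sLO, Finset.sum_range_succ']
  simp only [Nat.succ_sub_succ, Nat.sub_zero]
  have h2 : ∀ ℓ ∈ Finset.range m, sLO p n (m-ℓ) / 2^(ℓ+1+1) = (sLO p n (m-ℓ) / 2^(ℓ+1))/2 := by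
    intro ℓ _; rw [pow_succ]; ring
  rw [Finset.sum_congr rfl h2, ← Finset.sum_div, h1]
  ring

/-- Theorem 12 of the paper. Closed forms for the mean and the
variance of the LeadingOnes optimization time. -/
theorem leadingones_mean_variance (p : ℝ) (hp0 : 0 < p) (hp1 : p < 1) (n : ℕ) :
    ∀ m, 1 ≤ m → m ≤ n →
      nuLO p n m = (1/(p*(1-p)^(n-1))) * ((1 - (1-p)^(m-1))/(2*p) + (1-p)^(m-1)) ∧
      sLO p n m - (nuLO p n m)^2
        = -nuLO p n m
            + (3*(1-p)^2 - (4*(1-p)^2 - 1)*(1-p)^(2*m))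
                / (4*p^3*(1+(1-p))*(1-p)^(2*n)) := by
  have hp : p ≠ 0 := ne_of_gt hp0
  have hq : (1:ℝ) - p ≠ 0 := by linarith
  have h2p : (1:ℝ) + (1 - p) ≠ 0 := by linarith
  intro m hm1 hmn
  induction m, hm1 using Nat.le_induction generalizing n with
  | base =>
      obtain ⟨k, rfl⟩ : ∃ k, n = 1 + k := Nat.exists_eq_add_of_le hmn
      have e1 : 1 + k - 1 = k := by omega
      have e2 : 2 * (1 + k) = 2*k + 2 := by omega
      constructor
      · rw [nuLO_one, e1]
        norm_num
      · rw [sLO_one, nuLO_one, e1, e2]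
        norm_num
        field_simp
        ring
  | succ m hm ih =>
      obtain ⟨m', rfl⟩ : ∃ m', m = m'+1 := ⟨m-1, by omega⟩
      obtain ⟨k, rfl⟩ : ∃ k, n = (m'+2) + k := Nat.exists_eq_add_of_le hmn
      have e0 : m' + 2 + k - (m'+2) = k := by omega
      have e1 : m' + 2 + k - (m'+1) = k+1 := by omega
      have e2 : m' + 2 + k - 1 = m' + 1 + k := by omega
      have e3 : m' + 1 + 1 - 1 = m' + 1 := by omega
      have e4 : m' + 1 - 1 = m' := by omega
      obtain ⟨ihn, ihs⟩ := ih (m'+2+k) (by omega)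
      have hnu2 : nuLO p (m'+2+k) (m'+2)
          = (1/(p*(1-p)^(m'+1+k))) * ((1 - (1-p)^(m'+1))/(2*p) + (1-p)^(m'+1)) := by
        rw [nuLO_rec, e0, e1, ihn, e2, e4]
        field_simp
        ring
      refine ⟨by rw [show m'+1+1 = m'+2 from rfl, hnu2, e2, e3], ?_⟩
      rw [show m'+1+1 = m'+2 from rfl, sLO_rec, e0, e1, hnu2, ihn, e2, e4]
      have hv := ihs
      rw [ihn, e2, e4] at hv
      rw [sub_eq_iff_eq_add] at hv
      rw [hv]
      field_simp
      ring

end EA
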